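/- Let ξ : ℝ³ → ℝ be twice continuously differentiable, let Φ(r, θ₁, θ₂) = (r cos(2π(αθ₁ + θ₂)), r sin(2π(αθ₁ + θ₂)), τθ₁), and let ξ̂ = ξ ∘ Φ. Then at every point (r, θ₁, θ₂) with r > 0, the Euclidean Laplacian of ξ evaluated at Φ(r, θ₁, θ₂) equals ∂²ξ̂/∂r² + (1/r) ∂ξ̂/∂r + (1/τ²) ∂²ξ̂/∂θ₁² − (2α/τ²) ∂²ξ̂/∂θ₁∂θ₂ + (1/(4π²)) (1/r² + 4π²α²/τ²) ∂²ξ̂/∂θ₂², all partial derivatives being evaluated at (r, θ₁, θ₂). -/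

import Mathlib

noncomputable section

open Real

/-- The Euclidean Laplacian of `ξ : ℝ³ → ℝ`, `Δξ = ∂²ξ/∂x₁² + ∂²ξ/∂x₂² + ∂²ξ/∂x₃²`,
expressed via iterated Fréchet derivatives in the coordinate directions. -/
def lap (ξ : (Fin 3 → ℝ) → ℝ) (x : Fin 3 → ℝ) : ℝ :=
  ∑ i : Fin 3, fderiv ℝ (fun y => fderiv ℝ ξ y (Pi.single i 1)) x (Pi.single i 1)

/-- The inverse helical coordinate transformation
`Φ(r, θ₁, θ₂) = (r cos(2π(αθ₁ + θ₂)), r sin(2π(αθ₁ + θ₂)), τθ₁)`. -/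
def Φmap (α τ : ℝ) (r θ₁ θ₂ : ℝ) : Fin 3 → ℝ :=
  ![r * Real.cos (2 * Real.pi * (α * θ₁ + θ₂)),
    r * Real.sin (2 * Real.pi * (α * θ₁ + θ₂)),
    τ * θ₁]

section aux
variable {ξ : (Fin 3 → ℝ) → ℝ}

lemma clm_expand {F : Type*} [NormedAddCommGroup F] [NormedSpace ℝ F]
    (L : (Fin 3 → ℝ) →L[ℝ] F) (w : Fin 3 → ℝ) :
    L w = w 0 • L (Pi.single 0 1) + w 1 • L (Pi.single 1 1) + w 2 • L (Pi.single 2 1) := by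
  have hw : w = w 0 • (Pi.single 0 1 : Fin 3 → ℝ) + w 1 • (Pi.single 1 1 : Fin 3 → ℝ)
      + w 2 • (Pi.single 2 1 : Fin 3 → ℝ) := by
    funext i; fin_cases i <;> simp [Pi.single_apply]
  conv_lhs => rw [hw]
  simp

lemma clm2_expand (H : (Fin 3 → ℝ) →L[ℝ] (Fin 3 → ℝ) →L[ℝ] ℝ) (v w : Fin 3 → ℝ) :
    H v w = v 0 * (w 0 * H (Pi.single 0 1) (Pi.single 0 1)
                 + w 1 * H (Pi.single 0 1) (Pi.single 1 1)
                 + w 2 * H (Pi.single 0 1) (Pi.single 2 1))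
          + v 1 * (w 0 * H (Pi.single 1 1) (Pi.single 0 1)
                 + w 1 * H (Pi.single 1 1) (Pi.single 1 1)
                 + w 2 * H (Pi.single 1 1) (Pi.single 2 1))
          + v 2 * (w 0 * H (Pi.single 2 1) (Pi.single 0 1)
                 + w 1 * H (Pi.single 2 1) (Pi.single 1 1)
                 + w 2 * H (Pi.single 2 1) (Pi.single 2 1)) := by
  rw [clm_expand H v]
  simp only [ContinuousLinearMap.add_apply, ContinuousLinearMap.smul_apply, smul_eq_mul]
  rw [clm_expand (H (Pi.single 0 1)) w, clm_expand (H (Pi.single 1 1)) w,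
    clm_expand (H (Pi.single 2 1)) w]
  simp only [smul_eq_mul]

lemma fd1 (hξ : ContDiff ℝ 2 ξ) (γ : ℝ → Fin 3 → ℝ) (v : ℝ → Fin 3 → ℝ)
    (hγ : ∀ t, HasDerivAt γ (v t) t) (t : ℝ) :
    deriv (fun s => ξ (γ s)) t = fderiv ℝ ξ (γ t) (v t) :=
  (((hξ.differentiable two_ne_zero).differentiableAt.hasFDerivAt).comp_hasDerivAt t (hγ t)).deriv

lemma fd_apply (hξ : ContDiff ℝ 2 ξ) (Γ V : ℝ → Fin 3 → ℝ) (vΓ W : Fin 3 → ℝ) (t : ℝ)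
    (hΓ : HasDerivAt Γ vΓ t) (hV : HasDerivAt V W t) :
    deriv (fun a => fderiv ℝ ξ (Γ a) (V a)) t
      = fderiv ℝ (fderiv ℝ ξ) (Γ t) vΓ (V t) + fderiv ℝ ξ (Γ t) W := by
  have hC1 : ContDiff ℝ 1 (fderiv ℝ ξ) := hξ.fderiv_right (by norm_num)
  have hc : HasDerivAt (fun a => fderiv ℝ ξ (Γ a)) (fderiv ℝ (fderiv ℝ ξ) (Γ t) vΓ) t :=
    ((hC1.differentiable one_ne_zero).differentiableAt.hasFDerivAt).comp_hasDerivAt t hΓ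
  exact (hc.clm_apply hV).deriv

lemma fd2 (hξ : ContDiff ℝ 2 ξ) (γ v a : ℝ → Fin 3 → ℝ)
    (hγ : ∀ t, HasDerivAt γ (v t) t) (hv : ∀ t, HasDerivAt v (a t) t) (t : ℝ) :
    deriv (deriv (fun s => ξ (γ s))) t
      = fderiv ℝ (fderiv ℝ ξ) (γ t) (v t) (v t) + fderiv ℝ ξ (γ t) (a t) := by
  have h1 : deriv (fun s => ξ (γ s)) = fun s => fderiv ℝ ξ (γ s) (v s) :=
    funext fun s => fd1 hξ γ v hγ s
  rw [h1]
  exact fd_apply hξ γ v (v t) (a t) t (hγ t) (hv t)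

lemma lap_eq (hξ : ContDiff ℝ 2 ξ) (x : Fin 3 → ℝ) :
    lap ξ x = ∑ i : Fin 3, fderiv ℝ (fderiv ℝ ξ) x (Pi.single i 1) (Pi.single i 1) := by
  have hC1 : ContDiff ℝ 1 (fderiv ℝ ξ) := hξ.fderiv_right (by norm_num)
  unfold lap
  refine Finset.sum_congr rfl fun i _ => ?_
  have h : HasFDerivAt (fun y => fderiv ℝ ξ y (Pi.single i 1))
      ((ContinuousLinearMap.apply ℝ ℝ (Pi.single i 1 : Fin 3 → ℝ)).comp
        (fderiv ℝ (fderiv ℝ ξ) x)) x :=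
    (ContinuousLinearMap.apply ℝ ℝ (Pi.single i 1 : Fin 3 → ℝ)).hasFDerivAt.comp x
      ((hC1.differentiable one_ne_zero).differentiableAt.hasFDerivAt)
  rw [h.fderiv]; rfl

end aux

/-- for twice continuously differentiable `ξ : ℝ³ → ℝ` and `ξ̂ = ξ ∘ Φ`, at every
point with `r > 0`,
`Δξ(Φ(r,θ₁,θ₂)) = ξ̂_rr + (1/r) ξ̂_r + (1/τ²) ξ̂_{θ₁θ₁} − (2α/τ²) ξ̂_{θ₁θ₂}
  + (1/(4π²)) (1/r² + 4π²α²/τ²) ξ̂_{θ₂θ₂}`. -/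
theorem stmt_18 (α τ : ℝ) (hα0 : 0 ≤ α) (hα1 : α < 1) (hτ : 0 < τ)
    (ξ : (Fin 3 → ℝ) → ℝ) (hξ : ContDiff ℝ 2 ξ)
    (r θ₁ θ₂ : ℝ) (hr : 0 < r) :
    lap ξ (Φmap α τ r θ₁ θ₂)
      = deriv (deriv (fun s => ξ (Φmap α τ s θ₁ θ₂))) r
        + (1 / r) * deriv (fun s => ξ (Φmap α τ s θ₁ θ₂)) r
        + (1 / τ ^ 2) * deriv (deriv (fun a => ξ (Φmap α τ r a θ₂))) θ₁
        - (2 * α / τ ^ 2) * deriv (fun a => deriv (fun b => ξ (Φmap α τ r a b)) θ₂) θ₁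
        + (1 / (4 * Real.pi ^ 2)) * (1 / r ^ 2 + 4 * Real.pi ^ 2 * α ^ 2 / τ ^ 2)
            * deriv (deriv (fun b => ξ (Φmap α τ r θ₁ b))) θ₂ := by
  have hπ : (Real.pi : ℝ) ≠ 0 := Real.pi_ne_zero
  have hr0 : r ≠ 0 := ne_of_gt hr
  have hτ0 : τ ≠ 0 := ne_of_gt hτ
  have hdiff := hξ.differentiable two_ne_zero
  have hC1 : ContDiff ℝ 1 (fderiv ℝ ξ) := hξ.fderiv_right (by norm_num)
  set x : Fin 3 → ℝ := Φmap α τ r θ₁ θ₂ with hxdef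
  set H := fderiv ℝ (fderiv ℝ ξ) x with hHdef
  set G := fderiv ℝ ξ x with hGdef
  set C := Real.cos (2 * Real.pi * (α * θ₁ + θ₂)) with hCdef
  set S := Real.sin (2 * Real.pi * (α * θ₁ + θ₂)) with hSdef
  have hsym : ∀ v w, H v w = H w v :=
    second_derivative_symmetric (fun y => (hdiff y).hasFDerivAt)
      ((hC1.differentiable one_ne_zero x).hasFDerivAt)
  -- φ derivatives
  have hφ1 : ∀ a : ℝ, HasDerivAt (fun a => 2*Real.pi*(α*a+θ₂)) (2*Real.pi*α) a := by
    intro a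
    simpa using (((hasDerivAt_id a).const_mul α).add_const θ₂).const_mul (2*Real.pi)
  have hφ2 : ∀ b : ℝ, HasDerivAt (fun b => 2*Real.pi*(α*θ₁+b)) (2*Real.pi) b := by
    intro b
    simpa using ((hasDerivAt_id b).const_add (α*θ₁)).const_mul (2*Real.pi)
  -- r-curve
  have hγr : ∀ t : ℝ, HasDerivAt (fun s => Φmap α τ s θ₁ θ₂)
      ((fun _ : ℝ => (![Real.cos (2*Real.pi*(α*θ₁+θ₂)), Real.sin (2*Real.pi*(α*θ₁+θ₂)), 0]
        : Fin 3 → ℝ)) t) t := by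
    intro t
    apply hasDerivAt_pi.2
    intro i
    fin_cases i
    · exact hasDerivAt_mul_const _
    · exact hasDerivAt_mul_const _
    · exact hasDerivAt_const t _
  have hvr : ∀ t : ℝ, HasDerivAt (fun _ : ℝ => (![Real.cos (2*Real.pi*(α*θ₁+θ₂)),
      Real.sin (2*Real.pi*(α*θ₁+θ₂)), 0] : Fin 3 → ℝ)) ((fun _ : ℝ => (0 : Fin 3 → ℝ)) t) t :=
    fun t => hasDerivAt_const t _
  -- θ₁-curve
  have hγ1 : ∀ a : ℝ, HasDerivAt (fun a => Φmap α τ r a θ₂)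
      ((fun a : ℝ => (![r * (-Real.sin (2*Real.pi*(α*a+θ₂)) * (2*Real.pi*α)),
        r * (Real.cos (2*Real.pi*(α*a+θ₂)) * (2*Real.pi*α)), τ] : Fin 3 → ℝ)) a) a := by
    intro a
    apply hasDerivAt_pi.2
    intro i
    fin_cases i
    · exact ((Real.hasDerivAt_cos _).comp a (hφ1 a)).const_mul r
    · exact ((Real.hasDerivAt_sin _).comp a (hφ1 a)).const_mul r
    · simpa [Φmap] using (hasDerivAt_id a).const_mul τ
  have hv1 : ∀ a : ℝ, HasDerivAt (fun a : ℝ => (![r * (-Real.sin (2*Real.pi*(α*a+θ₂)) * (2*Real.pi*α)),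
      r * (Real.cos (2*Real.pi*(α*a+θ₂)) * (2*Real.pi*α)), τ] : Fin 3 → ℝ))
      ((fun a : ℝ => (![r * (-(Real.cos (2*Real.pi*(α*a+θ₂)) * (2*Real.pi*α)) * (2*Real.pi*α)),
        r * (-Real.sin (2*Real.pi*(α*a+θ₂)) * (2*Real.pi*α) * (2*Real.pi*α)), 0] : Fin 3 → ℝ)) a) a := by
    intro a
    apply hasDerivAt_pi.2
    intro i
    fin_cases i
    · exact (((Real.hasDerivAt_sin _).comp a (hφ1 a)).neg.mul_const (2*Real.pi*α)).const_mul r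
    · exact (((Real.hasDerivAt_cos _).comp a (hφ1 a)).mul_const (2*Real.pi*α)).const_mul r
    · exact hasDerivAt_const a τ
  -- θ₂-curve
  have hγ2 : ∀ b : ℝ, HasDerivAt (fun b => Φmap α τ r θ₁ b)
      ((fun b : ℝ => (![r * (-Real.sin (2*Real.pi*(α*θ₁+b)) * (2*Real.pi)),
        r * (Real.cos (2*Real.pi*(α*θ₁+b)) * (2*Real.pi)), 0] : Fin 3 → ℝ)) b) b := by
    intro b
    apply hasDerivAt_pi.2
    intro i
    fin_cases i
    · exact ((Real.hasDerivAt_cos _).comp b (hφ2 b)).const_mul r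
    · exact ((Real.hasDerivAt_sin _).comp b (hφ2 b)).const_mul r
    · exact hasDerivAt_const b _
  have hv2 : ∀ b : ℝ, HasDerivAt (fun b : ℝ => (![r * (-Real.sin (2*Real.pi*(α*θ₁+b)) * (2*Real.pi)),
      r * (Real.cos (2*Real.pi*(α*θ₁+b)) * (2*Real.pi)), 0] : Fin 3 → ℝ))
      ((fun b : ℝ => (![r * (-(Real.cos (2*Real.pi*(α*θ₁+b)) * (2*Real.pi)) * (2*Real.pi)),
        r * (-Real.sin (2*Real.pi*(α*θ₁+b)) * (2*Real.pi) * (2*Real.pi)), 0] : Fin 3 → ℝ)) b) b := by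
    intro b
    apply hasDerivAt_pi.2
    intro i
    fin_cases i
    · exact (((Real.hasDerivAt_sin _).comp b (hφ2 b)).neg.mul_const (2*Real.pi)).const_mul r
    · exact (((Real.hasDerivAt_cos _).comp b (hφ2 b)).mul_const (2*Real.pi)).const_mul r
    · exact hasDerivAt_const b _
  -- mixed: inner derivative in b, for each a
  have hγmix : ∀ a b : ℝ, HasDerivAt (fun b => Φmap α τ r a b)
      ((fun b : ℝ => (![r * (-Real.sin (2*Real.pi*(α*a+b)) * (2*Real.pi)),
        r * (Real.cos (2*Real.pi*(α*a+b)) * (2*Real.pi)), 0] : Fin 3 → ℝ)) b) b := by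
    intro a b
    have hφ : HasDerivAt (fun b => 2*Real.pi*(α*a+b)) (2*Real.pi) b := by
      simpa using ((hasDerivAt_id b).const_add (α*a)).const_mul (2*Real.pi)
    apply hasDerivAt_pi.2
    intro i
    fin_cases i
    · exact ((Real.hasDerivAt_cos _).comp b hφ).const_mul r
    · exact ((Real.hasDerivAt_sin _).comp b hφ).const_mul r
    · exact hasDerivAt_const b _
  have hinner : (fun a => deriv (fun b => ξ (Φmap α τ r a b)) θ₂)
      = fun a => fderiv ℝ ξ (Φmap α τ r a θ₂)
        (![r * (-Real.sin (2*Real.pi*(α*a+θ₂)) * (2*Real.pi)),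
           r * (Real.cos (2*Real.pi*(α*a+θ₂)) * (2*Real.pi)), 0]) :=
    funext fun a => fd1 hξ (fun b => Φmap α τ r a b) _ (hγmix a) θ₂
  have hVd : HasDerivAt (fun a : ℝ => (![r * (-Real.sin (2*Real.pi*(α*a+θ₂)) * (2*Real.pi)),
      r * (Real.cos (2*Real.pi*(α*a+θ₂)) * (2*Real.pi)), 0] : Fin 3 → ℝ))
      (![r * (-(Real.cos (2*Real.pi*(α*θ₁+θ₂)) * (2*Real.pi*α)) * (2*Real.pi)),
        r * (-Real.sin (2*Real.pi*(α*θ₁+θ₂)) * (2*Real.pi*α) * (2*Real.pi)), 0]) θ₁ := by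
    apply hasDerivAt_pi.2
    intro i
    fin_cases i
    · exact (((Real.hasDerivAt_sin _).comp θ₁ (hφ1 θ₁)).neg.mul_const (2*Real.pi)).const_mul r
    · exact (((Real.hasDerivAt_cos _).comp θ₁ (hφ1 θ₁)).mul_const (2*Real.pi)).const_mul r
    · exact hasDerivAt_const θ₁ _
  -- the five derivative computations
  have Trr : deriv (deriv (fun s => ξ (Φmap α τ s θ₁ θ₂))) r
      = H (![C, S, 0]) (![C, S, 0]) + G 0 := by
    have := fd2 hξ (fun s => Φmap α τ s θ₁ θ₂) _ _ hγr hvr r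
    simpa [hxdef, hHdef, hGdef, hCdef, hSdef, Φmap] using this
  have Tr : deriv (fun s => ξ (Φmap α τ s θ₁ θ₂)) r = G (![C, S, 0]) := by
    have := fd1 hξ (fun s => Φmap α τ s θ₁ θ₂) _ hγr r
    simpa [hxdef, hGdef, hCdef, hSdef, Φmap] using this
  have T11 : deriv (deriv (fun a => ξ (Φmap α τ r a θ₂))) θ₁
      = H (![r * (-S * (2*Real.pi*α)), r * (C * (2*Real.pi*α)), τ])
          (![r * (-S * (2*Real.pi*α)), r * (C * (2*Real.pi*α)), τ])
        + G (![r * (-(C * (2*Real.pi*α)) * (2*Real.pi*α)),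
               r * (-S * (2*Real.pi*α) * (2*Real.pi*α)), 0]) := by
    have := fd2 hξ (fun a => Φmap α τ r a θ₂) _ _ hγ1 hv1 θ₁
    simpa [hxdef, hHdef, hGdef, hCdef, hSdef, Φmap] using this
  have T12 : deriv (fun a => deriv (fun b => ξ (Φmap α τ r a b)) θ₂) θ₁
      = H (![r * (-S * (2*Real.pi*α)), r * (C * (2*Real.pi*α)), τ])
          (![r * (-S * (2*Real.pi)), r * (C * (2*Real.pi)), 0])
        + G (![r * (-(C * (2*Real.pi*α)) * (2*Real.pi)),
               r * (-S * (2*Real.pi*α) * (2*Real.pi)), 0]) := by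
    rw [hinner]
    have := fd_apply hξ (fun a => Φmap α τ r a θ₂) _ _ _ θ₁ (hγ1 θ₁) hVd
    simpa [hxdef, hHdef, hGdef, hCdef, hSdef, Φmap] using this
  have T22 : deriv (deriv (fun b => ξ (Φmap α τ r θ₁ b))) θ₂
      = H (![r * (-S * (2*Real.pi)), r * (C * (2*Real.pi)), 0])
          (![r * (-S * (2*Real.pi)), r * (C * (2*Real.pi)), 0])
        + G (![r * (-(C * (2*Real.pi)) * (2*Real.pi)),
               r * (-S * (2*Real.pi) * (2*Real.pi)), 0]) := by
    have := fd2 hξ (fun b => Φmap α τ r θ₁ b) _ _ hγ2 hv2 θ₂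
    simpa [hxdef, hHdef, hGdef, hCdef, hSdef, Φmap] using this
  rw [lap_eq hξ x, Fin.sum_univ_three, Trr, Tr, T11, T12, T22]
  rw [clm2_expand H (![C, S, 0]) (![C, S, 0]),
    clm2_expand H (![r * (-S * (2*Real.pi*α)), r * (C * (2*Real.pi*α)), τ])
      (![r * (-S * (2*Real.pi*α)), r * (C * (2*Real.pi*α)), τ]),
    clm2_expand H (![r * (-S * (2*Real.pi*α)), r * (C * (2*Real.pi*α)), τ])
      (![r * (-S * (2*Real.pi)), r * (C * (2*Real.pi)), 0]),
    clm2_expand H (![r * (-S * (2*Real.pi)), r * (C * (2*Real.pi)), 0])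
      (![r * (-S * (2*Real.pi)), r * (C * (2*Real.pi)), 0]),
    clm_expand G (![C, S, 0]),
    clm_expand G (![r * (-(C * (2*Real.pi*α)) * (2*Real.pi*α)),
      r * (-S * (2*Real.pi*α) * (2*Real.pi*α)), 0]),
    clm_expand G (![r * (-(C * (2*Real.pi*α)) * (2*Real.pi)),
      r * (-S * (2*Real.pi*α) * (2*Real.pi)), 0]),
    clm_expand G (![r * (-(C * (2*Real.pi)) * (2*Real.pi)),
      r * (-S * (2*Real.pi) * (2*Real.pi)), 0])]
  have h10 : H (Pi.single 1 1) (Pi.single 0 1) = H (Pi.single 0 1) (Pi.single 1 1) := hsym _ _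
  have h20 : H (Pi.single 2 1) (Pi.single 0 1) = H (Pi.single 0 1) (Pi.single 2 1) := hsym _ _
  have h21 : H (Pi.single 2 1) (Pi.single 1 1) = H (Pi.single 1 1) (Pi.single 2 1) := hsym _ _
  simp only [Matrix.cons_val_zero, Matrix.cons_val_one, Matrix.head_cons, Matrix.cons_val_two,
    Matrix.tail_cons, smul_eq_mul, map_zero, add_zero, h10, h20, h21]
  have hcs : S ^ 2 + C ^ 2 = 1 := Real.sin_sq_add_cos_sq _
  field_simp
  linear_combination (-4 * r^2 * τ^2 * Real.pi^2) *
    (H (Pi.single 0 1) (Pi.single 0 1) + H (Pi.single 1 1) (Pi.single 1 1)) * hcs
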